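/- Let a : ℝ → ℝ be C¹ with a' strictly increasing, and define G_v(r) := ∫_{v−r}^{v+r} ∫_{v−r}^{v+r} |a'(σ) − a'(τ)| dσ dτ for r ≥ 0. Then G_v is strictly convex on [0,∞). -/

import Mathlib

open MeasureTheory intervalIntegral

private lemma inner_eq (f : ℝ → ℝ) (hf : Continuous f) (hm : Monotone f) {A B σ : ℝ}
    (h1 : A ≤ σ) (h2 : σ ≤ B) :
    ∫ τ in A..B, |f σ - f τ| =
      ((σ - A) * f σ - ∫ τ in A..σ, f τ) + ((∫ τ in σ..B, f τ) - (B - σ) * f σ) := by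
  have hi : ∀ a b : ℝ, IntervalIntegrable (fun τ => |f σ - f τ|) volume a b :=
    fun a b => ((continuous_const.sub hf).abs).intervalIntegrable a b
  rw [← integral_add_adjacent_intervals (hi A σ) (hi σ B)]
  congr 1
  · have hc : Set.EqOn (fun τ => |f σ - f τ|) (fun τ => f σ - f τ) (Set.uIcc A σ) := by
      intro τ hτ
      rw [Set.uIcc_of_le h1] at hτ
      exact abs_of_nonneg (sub_nonneg.2 (hm hτ.2))
    rw [integral_congr hc, integral_sub (continuous_const.intervalIntegrable _ _)
      (hf.intervalIntegrable _ _), intervalIntegral.integral_const]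
    rw [smul_eq_mul]
  · have hc : Set.EqOn (fun τ => |f σ - f τ|) (fun τ => f τ - f σ) (Set.uIcc σ B) := by
      intro τ hτ
      rw [Set.uIcc_of_le h2] at hτ
      show |f σ - f τ| = f τ - f σ
      rw [abs_sub_comm]
      exact abs_of_nonneg (sub_nonneg.2 (hm hτ.1))
    rw [integral_congr hc, integral_sub (hf.intervalIntegrable _ _)
      (continuous_const.intervalIntegrable _ _), intervalIntegral.integral_const]
    rw [smul_eq_mul]

private lemma double_eq (f : ℝ → ℝ) (hf : Continuous f) (hm : Monotone f) (v r : ℝ)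
    (hr : 0 ≤ r) :
    (∫ σ in (v - r)..(v + r), ∫ τ in (v - r)..(v + r), |f σ - f τ|)
      = 4 * ∫ τ in (v - r)..(v + r), (τ - v) * f τ := by
  set A := v - r with hA
  set B := v + r with hB
  have hAB : A ≤ B := by rw [hA, hB]; linarith
  set F : ℝ → ℝ := fun u => ∫ t in A..u, f t with hFdef
  have hFdiff : ∀ x : ℝ, HasDerivAt F (f x) x :=
    fun x => (hf.integral_hasStrictDerivAt A x).hasDerivAt
  have hFd : Differentiable ℝ F := fun x => (hFdiff x).differentiableAt
  have hFc : Continuous F := hFd.continuous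
  have hg3 : ∀ σ : ℝ, (∫ τ in σ..B, f τ) = F B - F σ := by
    intro σ
    have h := integral_add_adjacent_intervals (μ := volume) (a := A) (b := σ) (c := B)
      (hf.intervalIntegrable _ _) (hf.intervalIntegrable _ _)
    rw [hFdef]; dsimp only; linarith [h]
  have step1 : (∫ σ in A..B, ∫ τ in A..B, |f σ - f τ|)
      = ∫ σ in A..B, (((σ - A) * f σ - F σ) + ((F B - F σ) - (B - σ) * f σ)) := by
    apply integral_congr
    intro σ hσ
    rw [Set.uIcc_of_le hAB] at hσ
    show (∫ τ in A..B, |f σ - f τ|) = _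
    rw [inner_eq f hf hm hσ.1 hσ.2, hg3 σ]
  rw [step1]
  have ii1 : IntervalIntegrable (fun σ => (σ - A) * f σ) volume A B :=
    ((continuous_id.sub continuous_const).mul hf).intervalIntegrable _ _
  have iiF : IntervalIntegrable F volume A B := hFc.intervalIntegrable _ _
  have ii3 : IntervalIntegrable (fun σ => F B - F σ) volume A B :=
    (continuous_const.sub hFc).intervalIntegrable _ _
  have ii4 : IntervalIntegrable (fun σ => (B - σ) * f σ) volume A B :=
    ((continuous_const.sub continuous_id).mul hf).intervalIntegrable _ _
  rw [integral_add (ii1.sub iiF) (ii3.sub ii4), integral_sub ii1 iiF, integral_sub ii3 ii4]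
  -- notation
  set I0 : ℝ := ∫ σ in A..B, f σ with hI0
  set I1 : ℝ := ∫ σ in A..B, σ * f σ with hI1
  have e1 : (∫ σ in A..B, (σ - A) * f σ) = I1 - A * I0 := by
    simp only [sub_mul]
    rw [integral_sub (f := fun σ => σ * f σ) (g := fun σ => A * f σ)
      ((continuous_id'.mul hf).intervalIntegrable _ _)
      ((continuous_const.mul hf).intervalIntegrable _ _), intervalIntegral.integral_const_mul]
  have e4 : (∫ σ in A..B, (B - σ) * f σ) = B * I0 - I1 := by
    simp only [sub_mul]
    rw [integral_sub (f := fun σ => B * f σ) (g := fun σ => σ * f σ)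
      ((continuous_const.mul hf).intervalIntegrable _ _)
      ((continuous_id'.mul hf).intervalIntegrable _ _), intervalIntegral.integral_const_mul]
  have e3 : (∫ σ in A..B, (F B - F σ)) = (B - A) * I0 - ∫ σ in A..B, F σ := by
    rw [integral_sub (continuous_const.intervalIntegrable _ _) iiF,
      intervalIntegral.integral_const, smul_eq_mul]
  have eR : (∫ τ in A..B, (τ - v) * f τ) = I1 - v * I0 := by
    simp only [sub_mul]
    rw [integral_sub (f := fun τ => τ * f τ) (g := fun τ => v * f τ)
      ((continuous_id'.mul hf).intervalIntegrable _ _)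
      ((continuous_const.mul hf).intervalIntegrable _ _), intervalIntegral.integral_const_mul]
  have parts : ∫ x in A..B, F x * 1 = F B * B - F A * A - ∫ x in A..B, f x * x :=
    integral_mul_deriv_eq_deriv_mul (fun x _ => hFdiff x) (fun x _ => hasDerivAt_id x)
      (hf.intervalIntegrable _ _) (continuous_const.intervalIntegrable _ _)
  have hFA : F A = 0 := integral_same
  have hFB : F B = I0 := rfl
  have hmulcomm : (∫ x in A..B, f x * x) = I1 := by
    rw [hI1]; congr 1; ext x; ring
  simp only [mul_one] at parts
  rw [e1, e3, e4, eR, parts, hFA, hFB, hmulcomm]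
  have hABv : A + B = 2 * v := by rw [hA, hB]; ring
  linear_combination (-2 * I0) * hABv

/-- If `a'` is strictly increasing then `G_v` is strictly convex on `[0,∞)`. -/
theorem stmt9 (a : ℝ → ℝ) (ha : ContDiff ℝ 1 a) (hmono : StrictMono (deriv a)) (v : ℝ) :
    StrictConvexOn ℝ (Set.Ici (0 : ℝ))
      (fun r => ∫ σ in (v - r)..(v + r), ∫ τ in (v - r)..(v + r),
        |deriv a σ - deriv a τ|) := by
  set f := deriv a with hfdef
  have hf : Continuous f := ha.continuous_deriv le_rfl
  have hm : Monotone f := hmono.monotone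
  set g : ℝ → ℝ := fun τ => (τ - v) * f τ with hgdef
  have hg : Continuous g := (continuous_id.sub continuous_const).mul hf
  set Φ : ℝ → ℝ := fun x => ∫ t in v..x, g t with hΦdef
  have hΦ : ∀ x, HasDerivAt Φ (g x) x :=
    fun x => (hg.integral_hasStrictDerivAt v x).hasDerivAt
  set H : ℝ → ℝ := fun r => 4 * (Φ (v + r) - Φ (v - r)) with hHdef
  have hHeq : ∀ r : ℝ, H r = 4 * ∫ τ in (v - r)..(v + r), g τ := by
    intro r
    have h := integral_add_adjacent_intervals (μ := volume) (a := v - r) (b := v) (c := v + r)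
      (hg.intervalIntegrable _ _) (hg.intervalIntegrable _ _)
    have h2 : (∫ t in (v - r)..v, g t) = - Φ (v - r) := by
      rw [hΦdef]; dsimp only; rw [← integral_symm]
    rw [hHdef]; dsimp only
    rw [← h, h2]
    ring
  have hHderiv : ∀ r : ℝ, HasDerivAt H (4 * r * (f (v + r) - f (v - r))) r := by
    intro r
    have h1 : HasDerivAt (fun r : ℝ => Φ (v + r)) (g (v + r)) r := by
      have := (hΦ (v + r)).comp r ((hasDerivAt_id r).const_add v)
      simpa [Function.comp_def] using this
    have h2 : HasDerivAt (fun r : ℝ => Φ (v - r)) (-g (v - r)) r := by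
      have := (hΦ (v - r)).comp r ((hasDerivAt_id r).const_sub v)
      simpa [Function.comp_def] using this
    have h3 : HasDerivAt (fun r => 4 * (Φ (v + r) - Φ (v - r))) (4 * (g (v + r) - -g (v - r))) r :=
      (h1.sub h2).const_mul (4 : ℝ)
    convert h3 using 1
    rw [hgdef]; dsimp only; ring
  have hHconv : StrictConvexOn ℝ (Set.Ici (0:ℝ)) H := by
    apply StrictMonoOn.strictConvexOn_of_deriv (convex_Ici 0)
    · exact fun x _ => (hHderiv x).differentiableAt.continuousAt.continuousWithinAt
    · rw [interior_Ici]
      intro x hx y hy hxy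
      rw [(hHderiv x).deriv, (hHderiv y).deriv]
      have hx0 : (0:ℝ) < x := hx
      have hy0 : (0:ℝ) < y := hy
      have q1 : f (v - y) < f (v - x) := hmono (by linarith)
      have q2 : f (v + x) < f (v + y) := hmono (by linarith)
      have q3 : f (v - x) < f (v + x) := hmono (by linarith)
      nlinarith
  refine ⟨hHconv.1, ?_⟩
  intro x hx y hy hxy p q hp hq hpq
  have key : ∀ r : ℝ, r ∈ Set.Ici (0:ℝ) →
      (∫ σ in (v - r)..(v + r), ∫ τ in (v - r)..(v + r), |deriv a σ - deriv a τ|) = H r := by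
    intro r hr
    rw [hHeq r]
    exact double_eq f hf hm v r hr
  have hmem : p • x + q • y ∈ Set.Ici (0:ℝ) := (convex_Ici 0) hx hy hp.le hq.le hpq
  simp only []
  rw [key x hx, key y hy, key _ hmem]
  exact hHconv.2 hx hy hxy hp hq hpq
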